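/- As formal power series in x₁, x₂, x₃, the generating function ∑_{k₁,k₂,k₃ ≥ 0} x₁^{k₁} x₂^{k₂} x₃^{k₃} C_{(k₁,k₂,k₃)}(q,t) equals (1 − q t² x₁x₂)(1 − q² t x₁x₂) / [(1 − q x₂)(1 − t x₂)(1 − q t x₁)(1 − t² x₁)(1 − q² x₁)(1 − q t x₁x₂)(1 − x₃)]. -/

import Mathlib

namespace QtCat
open Finset MvPowerSeries

def f (s m : ℕ) : ℕ := if 2 * m ≤ s then s - m else (s + 1) / 2

def top (q t : ℚ) (a b : ℕ) : ℚ :=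
  ∑ r3 ∈ range (a + b + 1), q ^ (a + r3) * t ^ (f (a + b - r3) (min a b))

def g (q t : ℚ) (a b : ℕ) : ℚ :=
  ∑ r2 ∈ range (a + 1), t ^ (2 * (a - r2)) * top q t r2 b

end QtCat

/-- The generalized `q,t`-Catalan number `C_{(k₁,k₂,k₃)}(q,t)`. -/
def genCatalan (k1 k2 k3 : ℕ) (q t : ℚ) : ℚ :=
  ∑ r2 ∈ Finset.range (k1 + 1), ∑ r3 ∈ Finset.range (r2 + k2 + 1),
    q ^ ((r2 : ℤ) + r3) *
      t ^ (if 2 * min (r2 : ℤ) (k2 : ℤ) ≤ (r2 : ℤ) + k2 - r3 then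
             2 * ((k1 : ℤ) - r2) + r2 + k2 - r3 - min (r2 : ℤ) (k2 : ℤ)
           else 2 * ((k1 : ℤ) - r2) + ⌈(((r2 : ℤ) + k2 - r3 : ℤ) : ℚ) / 2⌉)

namespace QtCat
open Finset MvPowerSeries

lemma ceil_nat_half (s : ℕ) : ⌈(((s : ℤ) : ℚ)) / 2⌉ = ((s + 1) / 2 : ℕ) := by
  set k := (s + 1) / 2 with hk
  have h1 : s ≤ 2 * k := by omega
  have h2 : 2 * k ≤ s + 1 := by omega
  have q1 : (s : ℚ) ≤ 2 * k := by exact_mod_cast h1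
  have q2 : (2 * k : ℚ) ≤ (s : ℚ) + 1 := by exact_mod_cast h2
  rw [Int.ceil_eq_iff]
  constructor <;> push_cast <;> [linarith; linarith]

lemma genCatalan_eq (q t : ℚ) (k1 k2 k3 : ℕ) : genCatalan k1 k2 k3 q t = g q t k1 k2 := by
  unfold genCatalan g top
  refine Finset.sum_congr rfl fun r2 hr2 => ?_
  rw [Finset.mul_sum]
  refine Finset.sum_congr rfl fun r3 hr3 => ?_
  rw [Finset.mem_range] at hr2 hr3
  have h2 : r2 ≤ k1 := by omega
  have h3 : r3 ≤ r2 + k2 := by omega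
  have hq : q ^ ((r2:ℤ) + r3) = q ^ (r2 + r3) := by
    rw [show ((r2:ℤ) + r3) = ((r2 + r3 : ℕ) : ℤ) by push_cast; ring, zpow_natCast]
  rw [hq]
  have hmin : min (r2:ℤ) (k2:ℤ) = ((min r2 k2 : ℕ) : ℤ) := by
    rcases le_total r2 k2 with h | h
    · rw [min_eq_left h, min_eq_left (by exact_mod_cast h : (r2:ℤ) ≤ k2)]
    · rw [min_eq_right h, min_eq_right (by exact_mod_cast h : (k2:ℤ) ≤ r2)]
  have hE : (if 2 * min (r2 : ℤ) (k2 : ℤ) ≤ (r2 : ℤ) + k2 - r3 then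
             2 * ((k1 : ℤ) - r2) + r2 + k2 - r3 - min (r2 : ℤ) (k2 : ℤ)
           else 2 * ((k1 : ℤ) - r2) + ⌈(((r2 : ℤ) + k2 - r3 : ℤ) : ℚ) / 2⌉)
      = ((2 * (k1 - r2) + f (r2 + k2 - r3) (min r2 k2) : ℕ) : ℤ) := by
    rw [hmin, show ((r2:ℤ) + k2 - r3) = ((r2 + k2 - r3 : ℕ) : ℤ) by omega, ceil_nat_half]
    unfold f
    split_ifs <;> omega
  rw [hE, zpow_natCast, pow_add]
  ring

lemma top_rec_u (q t : ℚ) (a b : ℕ) (h : a ≤ b) :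
    top q t a (b + 1) = q * top q t a b + q ^ a * t ^ (b + 1) := by
  unfold top
  rw [show a + (b + 1) + 1 = (a + b + 1) + 1 by omega, Finset.sum_range_succ']
  congr 1
  · rw [Finset.mul_sum]
    refine Finset.sum_congr rfl fun r3 hr3 => ?_
    rw [Finset.mem_range] at hr3
    rw [show a + (b+1) - (r3+1) = a + b - r3 by omega,
        min_eq_left (by omega), min_eq_left h,
        show a + (r3 + 1) = (a + r3) + 1 by omega, pow_succ]
    ring
  · rw [show a + (b+1) - 0 = a + b + 1 by omega,
      show f (a + b + 1) (min a (b+1)) = b + 1 by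
        unfold f
        rw [min_eq_left (by omega), if_pos (by omega)]
        omega, add_zero]

lemma top_rec_w (q t : ℚ) (a b : ℕ) (h : b ≤ a) :
    top q t (a + 1) b = q ^ 2 * top q t a b + q ^ (a + 1) * t ^ (a + 1) := by
  unfold top
  rw [show a + 1 + b + 1 = (a + b + 1) + 1 by omega, Finset.sum_range_succ']
  congr 1
  · rw [Finset.mul_sum]
    refine Finset.sum_congr rfl fun r3 hr3 => ?_
    rw [Finset.mem_range] at hr3
    rw [show a + 1 + b - (r3+1) = a + b - r3 by omega,
        min_eq_right (by omega), min_eq_right h,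
        show a + 1 + (r3 + 1) = (a + r3) + 2 by omega, show (a+r3)+2 = (a+r3)+1+1 by omega,
        pow_succ, pow_succ]
    ring
  · rw [show a + 1 + b - 0 = a + b + 1 by omega,
      show f (a + b + 1) (min (a+1) b) = a + 1 by
        unfold f
        rw [min_eq_right (by omega), if_pos (by omega)]
        omega, add_zero]

lemma f_small (s a : ℕ) (h : s ≤ 2 * a) : f s (a + 1) = f s a := by
  unfold f
  split_ifs <;> omega

lemma top_rec_d (q t : ℚ) (a : ℕ) :
    top q t (a + 1) (a + 1) = q ^ 3 * top q t a a + (q ^ (a + 2) + q ^ (a + 1)) * t ^ (a + 1) := by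
  unfold top
  rw [show a + 1 + (a + 1) + 1 = ((2 * a + 1) + 1) + 1 by omega, Finset.sum_range_succ',
      Finset.sum_range_succ']
  have h0 : q ^ (a + 1 + 0) * t ^ (f (a + 1 + (a + 1) - 0) (min (a+1) (a+1))) =
      q ^ (a+1) * t ^ (a+1) := by
    rw [min_self, show a + 1 + (a+1) - 0 = 2*a+2 by omega,
      show f (2*a+2) (a+1) = a+1 by unfold f; split_ifs <;> omega, add_zero]
  have h1 : q ^ (a + 1 + (0 + 1)) * t ^ (f (a + 1 + (a + 1) - (0+1)) (min (a+1) (a+1))) =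
      q ^ (a+2) * t ^ (a+1) := by
    rw [min_self, show a + 1 + (a+1) - (0+1) = 2*a+1 by omega,
      show f (2*a+1) (a+1) = a+1 by unfold f; split_ifs <;> omega,
      show a+1+(0+1) = a+2 by omega]
  have hs : ∑ k ∈ Finset.range (2*a+1),
      q ^ (a + 1 + (k+1+1)) * t ^ (f (a+1+(a+1) - (k+1+1)) (min (a+1) (a+1))) =
      q ^ 3 * ∑ r3 ∈ Finset.range (a + a + 1), q ^ (a + r3) * t ^ (f (a + a - r3) (min a a)) := by
    rw [Finset.mul_sum, show a + a + 1 = 2*a+1 by omega]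
    refine Finset.sum_congr rfl fun r3 hr3 => ?_
    rw [Finset.mem_range] at hr3
    rw [min_self, min_self, show a + 1 + (a+1) - (r3+1+1) = 2*a - r3 by omega,
      show 2*a - r3 = a + a - r3 by omega, ← f_small (a+a-r3) a (by omega),
      show a + 1 + (r3+1+1) = ((a+r3)+1)+1+1 by omega, pow_succ, pow_succ, pow_succ]
    ring
  rw [h0, h1, hs]
  ring

lemma top_zero (q t : ℚ) : top q t 0 0 = 1 := by
  simp [top, f]

lemma g_succ (q t : ℚ) (a b : ℕ) :
    g q t (a + 1) b = t ^ 2 * g q t a b + top q t (a + 1) b := by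
  unfold g
  rw [Finset.sum_range_succ, Nat.sub_self, mul_zero, pow_zero, one_mul, Finset.mul_sum]
  congr 1
  refine Finset.sum_congr rfl fun r2 hr2 => ?_
  rw [Finset.mem_range] at hr2
  rw [show 2 * (a + 1 - r2) = 2 + 2 * (a - r2) by omega, pow_add]
  ring

lemma g_zero (q t : ℚ) (b : ℕ) : g q t 0 b = top q t 0 b := by
  simp [g]

abbrev PS := MvPowerSeries (Fin 3) ℚ

noncomputable def v1 : Fin 3 →₀ ℕ := Finsupp.single 0 1
noncomputable def v2 : Fin 3 →₀ ℕ := Finsupp.single 1 1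
noncomputable def v3 : Fin 3 →₀ ℕ := Finsupp.single 2 1
noncomputable def v12 : Fin 3 →₀ ℕ := Finsupp.single 0 1 + Finsupp.single 1 1

@[simp] lemma v1_0 : v1 0 = 1 := by simp [v1, Finsupp.single_apply]
@[simp] lemma v1_1 : v1 1 = 0 := by simp [v1, Finsupp.single_apply]
@[simp] lemma v1_2 : v1 2 = 0 := by simp [v1, Finsupp.single_apply]
@[simp] lemma v2_0 : v2 0 = 0 := by simp [v2, Finsupp.single_apply]
@[simp] lemma v2_1 : v2 1 = 1 := by simp [v2, Finsupp.single_apply]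
@[simp] lemma v2_2 : v2 2 = 0 := by simp [v2, Finsupp.single_apply]
@[simp] lemma v3_0 : v3 0 = 0 := by simp [v3, Finsupp.single_apply]
@[simp] lemma v3_1 : v3 1 = 0 := by simp [v3, Finsupp.single_apply]
@[simp] lemma v3_2 : v3 2 = 1 := by simp [v3, Finsupp.single_apply]
@[simp] lemma v12_0 : v12 0 = 1 := by simp [v12, Finsupp.single_apply]
@[simp] lemma v12_1 : v12 1 = 1 := by simp [v12, Finsupp.single_apply]
@[simp] lemma v12_2 : v12 2 = 0 := by simp [v12, Finsupp.single_apply]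

lemma le3 {v n : Fin 3 →₀ ℕ} : v ≤ n ↔ v 0 ≤ n 0 ∧ v 1 ≤ n 1 ∧ v 2 ≤ n 2 := by
  rw [Finsupp.le_def]
  constructor
  · exact fun h => ⟨h 0, h 1, h 2⟩
  · rintro ⟨h0, h1, h2⟩ i
    fin_cases i <;> assumption

lemma eq3 {v n : Fin 3 →₀ ℕ} : n = v ↔ n 0 = v 0 ∧ n 1 = v 1 ∧ n 2 = v 2 := by
  constructor
  · rintro rfl; exact ⟨rfl, rfl, rfl⟩
  · rintro ⟨h0, h1, h2⟩
    ext i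
    fin_cases i <;> assumption

lemma mul_one_sub_mono (φ : PS) (v : Fin 3 →₀ ℕ) (c : ℚ) (n : Fin 3 →₀ ℕ) :
    coeff n (φ * (1 - monomial v c)) =
      coeff n φ - (if v ≤ n then c * coeff (n - v) φ else 0) := by
  rw [mul_sub, mul_one, map_sub, coeff_mul_monomial]
  split_ifs <;> ring

lemma CXmono (c : ℚ) (i : Fin 3) :
    C (σ := Fin 3) (R := ℚ) c * X i = monomial (Finsupp.single i 1) c := by
  rw [X_def, ← monomial_zero_eq_C_apply, monomial_mul_monomial, zero_add, mul_one]

lemma CX12mono (c : ℚ) : C (σ := Fin 3) (R := ℚ) c * (X 0 * X 1) = monomial v12 c := by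
  rw [X_def, X_def, monomial_mul_monomial, one_mul, ← monomial_zero_eq_C_apply,
    monomial_mul_monomial, zero_add, mul_one]
  rfl

noncomputable def Ff (q t : ℚ) : PS := fun n => genCatalan (n 0) (n 1) (n 2) q t
noncomputable def Gg (q t : ℚ) : PS := fun n => if n 2 = 0 then g q t (n 0) (n 1) else 0
noncomputable def Dd (q t : ℚ) : PS :=
  fun n => if n 2 = 0 ∧ n 0 = n 1 then top q t (n 0) (n 1) else 0
noncomputable def Uu (q t : ℚ) : PS :=
  fun n => if n 2 = 0 ∧ n 0 < n 1 then top q t (n 0) (n 1) else 0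
noncomputable def Ww (q t : ℚ) : PS :=
  fun n => if n 2 = 0 ∧ n 1 < n 0 then top q t (n 0) (n 1) else 0
noncomputable def Su (q t : ℚ) : PS :=
  fun n => if n 2 = 0 ∧ n 0 < n 1 then q ^ (n 0) * t ^ (n 1) else 0
noncomputable def Sw (q t : ℚ) : PS :=
  fun n => if n 2 = 0 ∧ n 1 < n 0 then q ^ (n 0) * t ^ (n 0) else 0

variable (q t : ℚ)

lemma coeff_Ff (n) : coeff n (Ff q t) = g q t (n 0) (n 1) := by
  rw [coeff_apply]; exact genCatalan_eq q t _ _ _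
lemma coeff_Gg (n) : coeff n (Gg q t) = if n 2 = 0 then g q t (n 0) (n 1) else 0 := rfl
lemma coeff_Dd (n) :
    coeff n (Dd q t) = if n 2 = 0 ∧ n 0 = n 1 then top q t (n 0) (n 1) else 0 := rfl
lemma coeff_Uu (n) :
    coeff n (Uu q t) = if n 2 = 0 ∧ n 0 < n 1 then top q t (n 0) (n 1) else 0 := rfl
lemma coeff_Ww (n) :
    coeff n (Ww q t) = if n 2 = 0 ∧ n 1 < n 0 then top q t (n 0) (n 1) else 0 := rfl
lemma coeff_Su (n) :
    coeff n (Su q t) = if n 2 = 0 ∧ n 0 < n 1 then q ^ (n 0) * t ^ (n 1) else 0 := rfl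
lemma coeff_Sw (n) :
    coeff n (Sw q t) = if n 2 = 0 ∧ n 1 < n 0 then q ^ (n 0) * t ^ (n 0) else 0 := rfl

lemma L1 : Ff q t * (1 - X 2) = Gg q t := by
  have hx : (X 2 : PS) = monomial v3 1 := rfl
  ext n
  rw [hx, mul_one_sub_mono, coeff_Gg]
  simp only [coeff_Ff, le3, Finsupp.tsub_apply, v3_0, v3_1, v3_2, Nat.sub_zero, zero_le,
    true_and, one_mul]
  split_ifs <;> first | omega | ring1


lemma L2 : Gg q t * (1 - C (σ := Fin 3) (R := ℚ) t ^ 2 * X 0) = Dd q t + Uu q t + Ww q t := by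
  have hx : C (σ := Fin 3) (R := ℚ) t ^ 2 * X 0 = monomial v1 (t ^ 2) := by
    rw [← map_pow, CXmono]; rfl
  ext n
  rw [hx, mul_one_sub_mono, map_add, map_add]
  simp only [coeff_Gg, coeff_Dd, coeff_Uu, coeff_Ww, le3, Finsupp.tsub_apply, v1_0, v1_1, v1_2,
    Nat.sub_zero, zero_le, true_and, and_true]
  generalize n 0 = a
  generalize n 1 = b
  generalize n 2 = c
  by_cases hc : c = 0
  · subst hc
    simp only [eq_self_iff_true, if_true, true_and]
    have hrhs : (if a = b then top q t a b else 0) + (if a < b then top q t a b else 0) +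
        (if b < a then top q t a b else 0) = top q t a b := by
      split_ifs <;> first | ring1 | omega
    rw [hrhs]
    rcases Nat.eq_zero_or_pos a with rfl | ha
    · simp [g_zero]
    · obtain ⟨a1, rfl⟩ : ∃ a1, a = a1 + 1 := ⟨a - 1, by omega⟩
      rw [if_pos (by omega : 1 ≤ a1 + 1)]
      simp only [Nat.add_sub_cancel]
      rw [g_succ]
      ring
  · split_ifs <;> first | ring1 | omega

lemma L3 : Dd q t * (1 - C (σ := Fin 3) (R := ℚ) q ^ 3 * (X 0 * X 1)) *
      (1 - C (σ := Fin 3) (R := ℚ) q * C (σ := Fin 3) (R := ℚ) t * (X 0 * X 1)) =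
      1 + C (σ := Fin 3) (R := ℚ) q ^ 2 * C (σ := Fin 3) (R := ℚ) t * (X 0 * X 1) := by
  have h1 : C (σ := Fin 3) (R := ℚ) q ^ 3 * (X 0 * X 1) = monomial v12 (q ^ 3) := by
    rw [← map_pow, CX12mono]
  have h2 : C (σ := Fin 3) (R := ℚ) q * C (σ := Fin 3) (R := ℚ) t * (X 0 * X 1) = monomial v12 (q * t) := by
    rw [← map_mul, CX12mono]
  have h3 : C (σ := Fin 3) (R := ℚ) q ^ 2 * C (σ := Fin 3) (R := ℚ) t * (X 0 * X 1) = monomial v12 (q ^ 2 * t) := by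
    rw [← map_pow, ← map_mul, CX12mono]
  ext n
  rw [h1, h2, h3, map_add, coeff_one, coeff_monomial]
  simp only [mul_one_sub_mono, coeff_Dd, le3, eq3, Finsupp.tsub_apply, v12_0, v12_1, v12_2,
    Finsupp.coe_zero, Pi.zero_apply, Nat.sub_zero, zero_le, true_and, and_true]
  generalize n 0 = a
  generalize n 1 = b
  generalize n 2 = c
  by_cases hc : c = 0
  · subst hc
    simp only [eq_self_iff_true, if_true, true_and, and_true]
    by_cases hab : a = b
    · subst hab
      rcases a with _ | _ | a
      · simp [top_zero]
      · have r := top_rec_d q t 0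
        norm_num at r ⊢
        linear_combination r - q * t * top_zero q t
      · have r1 := top_rec_d q t (a + 1)
        have r2 := top_rec_d q t a
        norm_num at r1 r2 ⊢
        linear_combination r1 - q * t * r2
    · split_ifs <;> first | ring1 | omega
  · split_ifs <;> first | ring1 | omega

lemma L4 : Uu q t * (1 - C (σ := Fin 3) (R := ℚ) q * X 1) = Dd q t * (C (σ := Fin 3) (R := ℚ) q * X 1) + Su q t := by
  have hx : C (σ := Fin 3) (R := ℚ) q * X 1 = monomial v2 q := by rw [CXmono]; rfl
  ext n
  rw [hx, mul_one_sub_mono, map_add, coeff_mul_monomial]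
  simp only [coeff_Uu, coeff_Dd, coeff_Su, le3, Finsupp.tsub_apply, v2_0, v2_1, v2_2,
    Nat.sub_zero, zero_le, true_and, and_true]
  generalize n 0 = a
  generalize n 1 = b
  generalize n 2 = c
  by_cases hc : c = 0
  · subst hc
    simp only [eq_self_iff_true, if_true, true_and]
    by_cases hab : a < b
    · obtain ⟨b1, rfl⟩ : ∃ b1, b = b1 + 1 := ⟨b - 1, by omega⟩
      simp only [Nat.add_sub_cancel]
      split_ifs <;> first | omega | linear_combination top_rec_u q t a b1 (by omega)
    · split_ifs <;> first | ring1 | omega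
  · split_ifs <;> first | ring1 | omega

lemma L5 : Ww q t * (1 - C (σ := Fin 3) (R := ℚ) q ^ 2 * X 0) = Dd q t * (C (σ := Fin 3) (R := ℚ) q ^ 2 * X 0) + Sw q t := by
  have hx : C (σ := Fin 3) (R := ℚ) q ^ 2 * X 0 = monomial v1 (q ^ 2) := by rw [← map_pow, CXmono]; rfl
  ext n
  rw [hx, mul_one_sub_mono, map_add, coeff_mul_monomial]
  simp only [coeff_Ww, coeff_Dd, coeff_Sw, le3, Finsupp.tsub_apply, v1_0, v1_1, v1_2,
    Nat.sub_zero, zero_le, true_and, and_true]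
  generalize n 0 = a
  generalize n 1 = b
  generalize n 2 = c
  by_cases hc : c = 0
  · subst hc
    simp only [eq_self_iff_true, if_true, true_and]
    by_cases hab : b < a
    · obtain ⟨a1, rfl⟩ : ∃ a1, a = a1 + 1 := ⟨a - 1, by omega⟩
      simp only [Nat.add_sub_cancel]
      split_ifs <;> first | omega | linear_combination top_rec_w q t a1 b (by omega)
    · split_ifs <;> first | ring1 | omega
  · split_ifs <;> first | ring1 | omega

lemma L6 : Su q t * (1 - C (σ := Fin 3) (R := ℚ) t * X 1) *
      (1 - C (σ := Fin 3) (R := ℚ) q * C (σ := Fin 3) (R := ℚ) t * (X 0 * X 1)) = C (σ := Fin 3) (R := ℚ) t * X 1 := by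
  have h1 : C (σ := Fin 3) (R := ℚ) t * X 1 = monomial v2 t := by rw [CXmono]; rfl
  have h2 : C (σ := Fin 3) (R := ℚ) q * C (σ := Fin 3) (R := ℚ) t * (X 0 * X 1) = monomial v12 (q * t) := by
    rw [← map_mul, CX12mono]
  ext n
  rw [h1, h2, coeff_monomial]
  simp only [mul_one_sub_mono, coeff_Su, le3, eq3, Finsupp.tsub_apply, v2_0, v2_1, v2_2,
    v12_0, v12_1, v12_2, Nat.sub_zero, zero_le, true_and, and_true]
  generalize n 0 = a
  generalize n 1 = b
  generalize n 2 = c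
  by_cases hc : c = 0
  · subst hc
    simp only [eq_self_iff_true, if_true, true_and, and_true]
    by_cases h1 : a < b
    · obtain ⟨b1, rfl⟩ : ∃ b1, b = b1 + 1 := ⟨b - 1, by omega⟩
      simp only [Nat.add_sub_cancel]
      rcases Nat.eq_zero_or_pos a with rfl | ha
      · rcases Nat.eq_zero_or_pos b1 with rfl | hb1
        · split_ifs <;> first | omega | ring1
        · obtain ⟨b2, rfl⟩ : ∃ b2, b1 = b2 + 1 := ⟨b1 - 1, by omega⟩
          simp only [Nat.add_sub_cancel]
          split_ifs <;> first | omega | ring1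
      · obtain ⟨a1, rfl⟩ : ∃ a1, a = a1 + 1 := ⟨a - 1, by omega⟩
        simp only [Nat.add_sub_cancel]
        rcases Nat.eq_zero_or_pos b1 with rfl | hb1
        · split_ifs <;> first | omega | ring1
        · obtain ⟨b2, rfl⟩ : ∃ b2, b1 = b2 + 1 := ⟨b1 - 1, by omega⟩
          simp only [Nat.add_sub_cancel]
          by_cases hd : a1 + 1 < b2 + 1
          · split_ifs <;> first | omega | ring1
          · obtain rfl : b2 = a1 := by omega
            split_ifs <;> first | omega | ring1
    · split_ifs <;> first | ring1 | omega
  · split_ifs <;> first | ring1 | omega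

lemma L7 : Sw q t * (1 - C (σ := Fin 3) (R := ℚ) q * C (σ := Fin 3) (R := ℚ) t * X 0) *
      (1 - C (σ := Fin 3) (R := ℚ) q * C (σ := Fin 3) (R := ℚ) t * (X 0 * X 1)) =
      C (σ := Fin 3) (R := ℚ) q * C (σ := Fin 3) (R := ℚ) t * X 0 := by
  have h1 : C (σ := Fin 3) (R := ℚ) q * C (σ := Fin 3) (R := ℚ) t * X 0 = monomial v1 (q * t) := by
    rw [← map_mul, CXmono]; rfl
  have h2 : C (σ := Fin 3) (R := ℚ) q * C (σ := Fin 3) (R := ℚ) t * (X 0 * X 1) = monomial v12 (q * t) := by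
    rw [← map_mul, CX12mono]
  ext n
  rw [h1, h2, coeff_monomial]
  simp only [mul_one_sub_mono, coeff_Sw, le3, eq3, Finsupp.tsub_apply, v1_0, v1_1, v1_2,
    v12_0, v12_1, v12_2, Nat.sub_zero, zero_le, true_and, and_true]
  generalize n 0 = a
  generalize n 1 = b
  generalize n 2 = c
  by_cases hc : c = 0
  · subst hc
    simp only [eq_self_iff_true, if_true, true_and, and_true]
    by_cases h1 : b < a
    · obtain ⟨a1, rfl⟩ : ∃ a1, a = a1 + 1 := ⟨a - 1, by omega⟩
      simp only [Nat.add_sub_cancel]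
      rcases Nat.eq_zero_or_pos b with rfl | hb
      · rcases Nat.eq_zero_or_pos a1 with rfl | ha1
        · split_ifs <;> first | omega | ring1
        · obtain ⟨a2, rfl⟩ : ∃ a2, a1 = a2 + 1 := ⟨a1 - 1, by omega⟩
          simp only [Nat.add_sub_cancel]
          split_ifs <;> first | omega | ring1
      · obtain ⟨b1, rfl⟩ : ∃ b1, b = b1 + 1 := ⟨b - 1, by omega⟩
        simp only [Nat.add_sub_cancel]
        rcases Nat.eq_zero_or_pos a1 with rfl | ha1
        · split_ifs <;> first | omega | ring1
        · obtain ⟨a2, rfl⟩ : ∃ a2, a1 = a2 + 1 := ⟨a1 - 1, by omega⟩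
          simp only [Nat.add_sub_cancel]
          by_cases hd : b1 + 1 < a2 + 1
          · split_ifs <;> first | omega | ring1
          · obtain rfl : a2 = b1 := by omega
            split_ifs <;> first | omega | ring1
    · split_ifs <;> first | ring1 | omega
  · split_ifs <;> first | ring1 | omega

lemma main : Ff q t * ((1 - C (σ := Fin 3) (R := ℚ) q * X 1) * (1 - C (σ := Fin 3) (R := ℚ) t * X 1) *
      (1 - C (σ := Fin 3) (R := ℚ) (q * t) * X 0) * (1 - C (σ := Fin 3) (R := ℚ) (t ^ 2) * X 0) *
      (1 - C (σ := Fin 3) (R := ℚ) (q ^ 2) * X 0) * (1 - C (σ := Fin 3) (R := ℚ) (q * t) * (X 0 * X 1)) *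
      (1 - X 2)) =
      (1 - C (σ := Fin 3) (R := ℚ) (q * t ^ 2) * (X 0 * X 1)) *
        (1 - C (σ := Fin 3) (R := ℚ) (q ^ 2 * t) * (X 0 * X 1)) := by
  simp only [map_mul, map_pow]
  linear_combination
    ((1 - C (σ := Fin 3) (R := ℚ) q * X 1) * (1 - C (σ := Fin 3) (R := ℚ) t * X 1) *
        (1 - C (σ := Fin 3) (R := ℚ) q * C (σ := Fin 3) (R := ℚ) t * X 0) * (1 - C (σ := Fin 3) (R := ℚ) t ^ 2 * X 0) *
        (1 - C (σ := Fin 3) (R := ℚ) q ^ 2 * X 0) * (1 - C (σ := Fin 3) (R := ℚ) q * C (σ := Fin 3) (R := ℚ) t * (X 0 * X 1))) *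
      L1 q t +
    ((1 - C (σ := Fin 3) (R := ℚ) q * X 1) * (1 - C (σ := Fin 3) (R := ℚ) t * X 1) *
        (1 - C (σ := Fin 3) (R := ℚ) q * C (σ := Fin 3) (R := ℚ) t * X 0) * (1 - C (σ := Fin 3) (R := ℚ) q ^ 2 * X 0) *
        (1 - C (σ := Fin 3) (R := ℚ) q * C (σ := Fin 3) (R := ℚ) t * (X 0 * X 1))) * L2 q t +
    ((1 - C (σ := Fin 3) (R := ℚ) t * X 1) * (1 - C (σ := Fin 3) (R := ℚ) q * C (σ := Fin 3) (R := ℚ) t * X 0)) * L3 q t +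
    ((1 - C (σ := Fin 3) (R := ℚ) t * X 1) * (1 - C (σ := Fin 3) (R := ℚ) q * C (σ := Fin 3) (R := ℚ) t * X 0) *
        (1 - C (σ := Fin 3) (R := ℚ) q ^ 2 * X 0) * (1 - C (σ := Fin 3) (R := ℚ) q * C (σ := Fin 3) (R := ℚ) t * (X 0 * X 1))) *
      L4 q t +
    ((1 - C (σ := Fin 3) (R := ℚ) q * X 1) * (1 - C (σ := Fin 3) (R := ℚ) t * X 1) *
        (1 - C (σ := Fin 3) (R := ℚ) q * C (σ := Fin 3) (R := ℚ) t * X 0) *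
        (1 - C (σ := Fin 3) (R := ℚ) q * C (σ := Fin 3) (R := ℚ) t * (X 0 * X 1))) * L5 q t +
    ((1 - C (σ := Fin 3) (R := ℚ) q * C (σ := Fin 3) (R := ℚ) t * X 0) * (1 - C (σ := Fin 3) (R := ℚ) q ^ 2 * X 0)) * L6 q t +
    ((1 - C (σ := Fin 3) (R := ℚ) q * X 1) * (1 - C (σ := Fin 3) (R := ℚ) t * X 1)) * L7 q t

end QtCat

open MvPowerSeries in
theorem stmt_17 (q t : ℚ) :
    let F : MvPowerSeries (Fin 3) ℚ := fun n => genCatalan (n 0) (n 1) (n 2) q t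
    let x1 : MvPowerSeries (Fin 3) ℚ := X 0
    let x2 : MvPowerSeries (Fin 3) ℚ := X 1
    let x3 : MvPowerSeries (Fin 3) ℚ := X 2
    let Cc : ℚ → MvPowerSeries (Fin 3) ℚ := MvPowerSeries.C
    F * ((1 - Cc q * x2) * (1 - Cc t * x2) * (1 - Cc (q * t) * x1) *
          (1 - Cc (t ^ 2) * x1) * (1 - Cc (q ^ 2) * x1) * (1 - Cc (q * t) * (x1 * x2)) *
          (1 - x3)) =
      (1 - Cc (q * t ^ 2) * (x1 * x2)) * (1 - Cc (q ^ 2 * t) * (x1 * x2)) := by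
  exact QtCat.main q t
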